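/- arXiv:2403.13088 — 2 statements merged into one kernel-verified Lean document; each statement's English description precedes it below -/
import Mathlib

section
/- For a commutative ring R and a unimodular vector f₁,…,fₙ : R, the map sending g ∈ R to the family (g/1)ᵢ is an isomorphism from R onto the set of families xᵢ ∈ R[1/fᵢ] such that for all i, j the images of xᵢ and xⱼ in R[1/(fᵢfⱼ)] under the canonical maps agree. -/
open Localization

/-- The canonical map `R[1/fᵢ] → R[1/(fᵢfⱼ)]` induced by the universal property. -/
noncomputable def chiL {R : Type*} [CommRing R] {n : ℕ} (f : Fin n → R) (i j : Fin n) :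
    Localization.Away (f i) →+* Localization.Away (f i * f j) :=
  Localization.awayLift (algebraMap R _) (f i)
    (isUnit_of_mul_isUnit_left (y := algebraMap R (Localization.Away (f i * f j)) (f j))
      (by rw [← map_mul]; exact IsLocalization.Away.algebraMap_isUnit _))

/-- The canonical map `R[1/fⱼ] → R[1/(fᵢfⱼ)]` induced by the universal property. -/
noncomputable def chiR {R : Type*} [CommRing R] {n : ℕ} (f : Fin n → R) (i j : Fin n) :
    Localization.Away (f j) →+* Localization.Away (f i * f j) :=
  Localization.awayLift (algebraMap R _) (f j)
    (isUnit_of_mul_isUnit_right (x := algebraMap R (Localization.Away (f i * f j)) (f i))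
      (by rw [← map_mul]; exact IsLocalization.Away.algebraMap_isUnit _))

lemma chiL_eq_awayToAwayRight {R : Type*} [CommRing R] {n : ℕ} (f : Fin n → R) (i j : Fin n) :
    chiL f i j = IsLocalization.Away.awayToAwayRight (S := Localization.Away (f i))
      (P := Localization.Away (f i * f j)) (f i) (f j) := rfl

lemma chiR_eq_awayToAwayLeft {R : Type*} [CommRing R] {n : ℕ} (f : Fin n → R) (i j : Fin n) :
    chiR f i j = IsLocalization.Away.awayToAwayLeft (S := Localization.Away (f j))
      (P := Localization.Away (f i * f j)) (f j) (f i) := rfl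

/-- For a unimodular vector `f₁,…,fₙ : R`, the map `g ↦ (g/1)ᵢ` is an
isomorphism of `R` onto the set of families `xᵢ ∈ R[1/fᵢ]` agreeing in `R[1/(fᵢfⱼ)]`:
it is injective, its image consists of compatible families, and every compatible
family comes from a (unique) `g : R`. -/
theorem localization_equalizer_iso {R : Type*} [CommRing R] {n : ℕ} (f : Fin n → R)
    (hf : (1 : R) ∈ Ideal.span (Set.range f)) :
    (Function.Injective fun (g : R) (i : Fin n) =>
        algebraMap R (Localization.Away (f i)) g) ∧
    (∀ (g : R) (i j : Fin n),
        chiL f i j (algebraMap R (Localization.Away (f i)) g) =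
          chiR f i j (algebraMap R (Localization.Away (f j)) g)) ∧
    (∀ x : (i : Fin n) → Localization.Away (f i),
        (∀ i j, chiL f i j (x i) = chiR f i j (x j)) →
        ∃ g : R, ∀ i, algebraMap R (Localization.Away (f i)) g = x i) := by
  have span_eq : Ideal.span (Set.range f) = ⊤ := (Ideal.eq_top_iff_one _).mpr hf
  have key : ∀ (M : ℕ), ∃ c : Fin n → R, ∑ i, c i * f i ^ M = 1 := by
    intro M
    have h1 : Ideal.span ((· ^ M) '' Set.range f) = ⊤ :=
      Ideal.span_pow_eq_top _ span_eq M
    rw [← Set.range_comp] at h1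
    obtain ⟨c, hc⟩ := (Submodule.mem_span_range_iff_exists_fun _).mp ((Ideal.eq_top_iff_one _).mp h1)
    exact ⟨c, by simpa [Function.comp] using hc⟩
  refine ⟨?_, fun g i j => by
      rw [chiL_eq_awayToAwayRight, chiR_eq_awayToAwayLeft,
        IsLocalization.Away.awayToAwayRight_eq, IsLocalization.Away.awayToAwayLeft_eq], ?_⟩
  · intro a b hab
    have h := fun i => congrFun hab i
    simp only at h
    choose m hm using fun i =>
      IsLocalization.Away.exists_of_eq (S := Localization.Away (f i)) (f i) (h i)
    set M := Finset.univ.sup m with hM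
    have hm' : ∀ i, f i ^ M * a = f i ^ M * b := by
      intro i
      rw [hM, ← Nat.sub_add_cancel (Finset.le_sup (Finset.mem_univ i)), pow_add, mul_assoc,
        mul_assoc, hm i]
    obtain ⟨c, hc⟩ := key M
    calc a = (∑ i, c i * f i ^ M) * a := by rw [hc, one_mul]
    _ = (∑ i, c i * f i ^ M) * b := by
        rw [Finset.sum_mul, Finset.sum_mul]
        exact Finset.sum_congr rfl fun i _ => by rw [mul_assoc, mul_assoc, hm' i]
    _ = b := by rw [hc, one_mul]
  · intro x hx
    have h : ∀ i j, IsLocalization.Away.awayToAwayRight (S := Localization.Away (f i))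
        (P := Localization.Away (f i * f j)) (f i) (f j) (x i)
          = IsLocalization.Away.awayToAwayLeft (f j) (f i) (x j) := hx
    choose m r eq using fun i ↦ IsLocalization.Away.surj (f i) (x i)
    let N := Finset.univ.sup m
    let r' : Fin n → R := fun i ↦ f i ^ (N - m i) * r i
    have eq' : ∀ i, x i * algebraMap R _ (f i ^ N) = algebraMap R _ (r' i) := by
      intro i
      rw [map_mul, ← eq, mul_left_comm, ← map_pow, ← map_mul, ← pow_add,
        Nat.sub_add_cancel (Finset.le_sup (Finset.mem_univ i))]
    have eq2 : ∀ i j, ∃ K, (f i * f j) ^ K * (r' i * f j ^ N)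
        = (f i * f j) ^ K * (r' j * f i ^ N) := by
      intro i j
      refine IsLocalization.Away.exists_of_eq
        (S := Localization.Away (f i * f j)) (f i * f j) ?_
      simp_rw [map_mul,
        ← IsLocalization.Away.awayToAwayRight_eq (S := Localization.Away (f i))
          (P := Localization.Away (f i * f j)) (f i) (f j) (r' i),
        ← IsLocalization.Away.awayToAwayLeft_eq (S := Localization.Away (f j))
          (P := Localization.Away (f i * f j)) (f j) (f i) (r' j),
        ← eq', map_mul, IsLocalization.Away.awayToAwayRight_eq,
        IsLocalization.Away.awayToAwayLeft_eq, h, mul_assoc, ← map_mul, mul_comm]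
    choose K hK using eq2
    let K' := Finset.univ.sup fun p : Fin n × Fin n => K p.1 p.2
    have eq2 : ∀ i j, (f i * f j) ^ K' * (r' i * f j ^ N)
        = (f i * f j) ^ K' * (r' j * f i ^ N) := by
      intro i j
      dsimp only [K']
      rw [← Nat.sub_add_cancel (Finset.le_sup (f := fun p : Fin n × Fin n => K p.1 p.2)
        (Finset.mem_univ (i, j))), pow_add, mul_assoc, hK, ← mul_assoc]
    let M := K' + N
    let r'' : Fin n → R := fun i ↦ f i ^ K' * r' i
    have eqM : ∀ i, x i * algebraMap R _ (f i ^ M) = algebraMap R _ (r'' i) := by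
      intro i
      dsimp only [M, r']
      rw [map_mul, ← eq', mul_left_comm, ← map_mul, ← pow_add]
    have eq2' : ∀ i j, r'' i * f j ^ M = r'' j * f i ^ M := by
      intro i j
      show f i ^ K' * r' i * f j ^ (K' + N) = f j ^ K' * r' j * f i ^ (K' + N)
      rw [pow_add, mul_mul_mul_comm, ← mul_pow, eq2,
        mul_comm (f i), mul_pow, mul_mul_mul_comm, ← pow_add]
    obtain ⟨c, eq1⟩ := key M
    refine ⟨∑ j, c j * r'' j, fun i ↦
      ((IsLocalization.Away.algebraMap_isUnit (S := Localization.Away (f i))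
        (f i)).pow M).mul_left_inj.mp ?_⟩
    rw [← map_pow, ← map_mul]
    calc algebraMap R (Localization.Away (f i)) ((∑ j, c j * r'' j) * f i ^ M)
        = algebraMap R _ ((∑ j, c j * r'' j * f i ^ M)) := by rw [Finset.sum_mul]
      _ = algebraMap R _ ((∑ j, c j * (r'' i * f j ^ M))) := by
          refine congrArg _ (Finset.sum_congr rfl fun j _ => ?_)
          rw [mul_assoc, eq2' j i]
      _ = algebraMap R _ (r'' i * ∑ j, c j * f j ^ M) := by
          rw [Finset.mul_sum]
          exact congrArg _ (Finset.sum_congr rfl fun j _ => by ring)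
      _ = algebraMap R _ (r'' i) := by rw [eq1, mul_one]
      _ = x i * algebraMap R _ (f i ^ M) := (eqM i).symm
end

section
/- The Zariski coverage is subcanonical: for any commutative ring A, the representable presheaf Sp(A) = Hom(A, −) on CommRing^op is a sheaf with respect to the Zariski coverage; concretely, for every ring R and unimodular vector f₁,…,fₙ : R, the map Hom(A,R) → {compatible families of homomorphisms φᵢ : A → R[1/fᵢ]} given by postcomposition with the localization maps is an isomorphism. -/
open Localization

section Aux
variable {R : Type*} [CommRing R]

/-- Transport between localizations away from equal elements. -/
noncomputable def castAway {v w : R} (h : v = w) :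
    Localization.Away v →+* Localization.Away w := by subst h; exact RingHom.id _

lemma castAway_algebraMap {v w : R} (h : v = w) (x : R) :
    castAway h (algebraMap R (Localization.Away v) x) = algebraMap R (Localization.Away w) x := by
  subst h; rfl

lemma awayToAway_castAway {v v' w w' : R} (hv : v = v') (hw : w = w')
    (x : Localization.Away v) (y : Localization.Away w)
    (hxy : IsLocalization.Away.awayToAwayRight (P := Localization.Away (v * w)) v w x =
      IsLocalization.Away.awayToAwayLeft w v y) :
    IsLocalization.Away.awayToAwayRight (P := Localization.Away (v' * w')) v' w' (castAway hv x) =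
      IsLocalization.Away.awayToAwayLeft w' v' (castAway hw y) := by
  subst hv; subst hw; exact hxy

lemma algebraMap_eq_of_castAway {v w : R} (h : v = w) (r : R) (x : Localization.Away v)
    (hx : algebraMap R (Localization.Away w) r = castAway h x) :
    algebraMap R (Localization.Away v) r = x := by
  subst h; exact hx

lemma castAway_of_algebraMap_eq {v w : R} (h : v = w) (r : R) (x : Localization.Away v)
    (hx : algebraMap R (Localization.Away v) r = x) :
    algebraMap R (Localization.Away w) r = castAway h x := by
  subst h; exact hx

end Aux
section Main
variable {A R : Type*} [CommRing A] [CommRing R]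

/-- Elementwise gluing: given a compatible family `φ` and `a : A`, there is a unique `r : R`
mapping to `φ i a` in each localization. -/
lemma existsUnique_elt {n : ℕ} (f : Fin n → R) (hf : (1 : R) ∈ Ideal.span (Set.range f))
    (φ : (i : Fin n) → (A →+* Localization.Away (f i)))
    (hφ : ∀ i j, (chiL f i j).comp (φ i) = (chiR f i j).comp (φ j)) (a : A) :
    ∃! r : R, ∀ i, algebraMap R (Localization.Away (f i)) r = φ i a := by
  have span_eq : Ideal.span (Set.range f) = ⊤ := (Ideal.eq_top_iff_one _).mpr hf
  -- the family indexed by the set `Set.range f`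
  set s : Set R := Set.range f with hs
  let g : Π b : s, Localization.Away b.1 := fun b => castAway b.2.choose_spec (φ b.2.choose a)
  have hcomp : ∀ b c : s,
      IsLocalization.Away.awayToAwayRight (P := Localization.Away (b.1 * c.1)) b.1 c.1 (g b) =
        IsLocalization.Away.awayToAwayLeft c.1 b.1 (g c) := by
    intro b c
    exact awayToAway_castAway b.2.choose_spec c.2.choose_spec _ _
      (by rw [← chiL_eq_awayToAwayRight, ← chiR_eq_awayToAwayLeft]
          exact DFunLike.congr_fun (hφ b.2.choose c.2.choose) a)
  obtain ⟨r, hr, hu⟩ := Localization.existsUnique_algebraMap_eq_of_span_eq_top s span_eq g hcomp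
  have key : ∀ i, algebraMap R (Localization.Away (f i)) r = φ i a := by
    intro i
    have hbmem : f i ∈ s := ⟨i, rfl⟩
    set b : s := ⟨f i, hbmem⟩ with hb
    set j : Fin n := b.2.choose with hj
    have hji : f j = f i := b.2.choose_spec
    have hrj : algebraMap R (Localization.Away (f j)) r = φ j a :=
      algebraMap_eq_of_castAway b.2.choose_spec r _ (hr b)
    -- retraction of `chiL f i j` using that `f j = f i` is a unit in `Away (f i)`
    have hu' : IsUnit (algebraMap R (Localization.Away (f i)) (f i * f j)) := by
      rw [map_mul, hji]
      exact (IsLocalization.Away.algebraMap_isUnit _).mul (IsLocalization.Away.algebraMap_isUnit _)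
    let ρ : Localization.Away (f i * f j) →+* Localization.Away (f i) :=
      Localization.awayLift (algebraMap R (Localization.Away (f i))) (f i * f j) hu'
    have hρa : ∀ x : R, ρ (algebraMap R (Localization.Away (f i * f j)) x) =
        algebraMap R (Localization.Away (f i)) x := fun x =>
      IsLocalization.Away.lift_eq _ _ _
    have hρL : ρ.comp (chiL f i j) = RingHom.id _ := by
      apply IsLocalization.ringHom_ext (Submonoid.powers (f i))
      ext x
      simp only [RingHom.comp_apply, RingHom.id_apply]
      rw [show chiL f i j (algebraMap R (Localization.Away (f i)) x) =
        algebraMap R (Localization.Away (f i * f j)) x from IsLocalization.Away.lift_eq _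
          (isUnit_of_mul_isUnit_left (y := algebraMap R (Localization.Away (f i * f j)) (f j))
            (by rw [← map_mul]; exact IsLocalization.Away.algebraMap_isUnit _)) x]
      exact hρa x
    have h1 : ρ (chiL f i j (φ i a)) = φ i a := DFunLike.congr_fun hρL (φ i a)
    have h2 : chiL f i j (φ i a) = chiR f i j (φ j a) := DFunLike.congr_fun (hφ i j) a
    have h3 : chiR f i j (φ j a) = algebraMap R (Localization.Away (f i * f j)) r := by
      rw [← hrj]
      exact IsLocalization.Away.lift_eq _
        (isUnit_of_mul_isUnit_right (x := algebraMap R (Localization.Away (f i * f j)) (f i))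
          (by rw [← map_mul]; exact IsLocalization.Away.algebraMap_isUnit _)) r
    rw [← h1, h2, h3, hρa]
  exact ⟨r, key, fun y hy => hu y fun b =>
    castAway_of_algebraMap_eq b.2.choose_spec y _ (hy b.2.choose)⟩

end Main

/-- The Zariski coverage is subcanonical: for any ring `A` and
unimodular vector `f₁,…,fₙ : R`, the map `Hom(A,R) → {compatible families φᵢ : A → R[1/fᵢ]}`
given by postcomposition with the localization maps is an isomorphism: it is injective,
lands in compatible families, and every compatible family arises from a unique morphism. -/
theorem zariski_coverage_subcanonical {A R : Type*} [CommRing A] [CommRing R]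
    {n : ℕ} (f : Fin n → R) (hf : (1 : R) ∈ Ideal.span (Set.range f)) :
    (Function.Injective fun (ψ : A →+* R) (i : Fin n) =>
        (algebraMap R (Localization.Away (f i))).comp ψ) ∧
    (∀ (ψ : A →+* R) (i j : Fin n),
        (chiL f i j).comp ((algebraMap R (Localization.Away (f i))).comp ψ) =
          (chiR f i j).comp ((algebraMap R (Localization.Away (f j))).comp ψ)) ∧
    (∀ φ : (i : Fin n) → (A →+* Localization.Away (f i)),
        (∀ i j, (chiL f i j).comp (φ i) = (chiR f i j).comp (φ j)) →
        ∃! ψ : A →+* R, ∀ i, (algebraMap R (Localization.Away (f i))).comp ψ = φ i) := by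
  refine ⟨?_, ?_, ?_⟩
  · intro ψ₁ ψ₂ h
    ext a
    apply Localization.algebraMap_injective_of_span_eq_top (Set.range f)
      ((Ideal.eq_top_iff_one _).mpr hf)
    funext b
    obtain ⟨v, i, rfl⟩ := b
    exact DFunLike.congr_fun (congrFun h i) a
  · intro ψ i j
    ext a
    simp only [RingHom.comp_apply]
    rw [chiL_eq_awayToAwayRight, chiR_eq_awayToAwayLeft,
      IsLocalization.Away.awayToAwayRight_eq, IsLocalization.Away.awayToAwayLeft_eq]
  · intro φ hφ
    choose! r h using fun a => existsUnique_elt f hf φ hφ a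
    let ψ : A →+* R :=
      { toFun := r
        map_one' := ((h 1).2 1 (fun i => by rw [map_one, map_one])).symm
        map_mul' := fun x y => ((h (x * y)).2 (r x * r y)
          (fun i => by rw [map_mul, map_mul, (h x).1 i, (h y).1 i])).symm
        map_zero' := ((h 0).2 0 (fun i => by rw [map_zero, map_zero])).symm
        map_add' := fun x y => ((h (x + y)).2 (r x + r y)
          (fun i => by rw [map_add, map_add, (h x).1 i, (h y).1 i])).symm }
    exact ⟨ψ, fun i => RingHom.ext fun a => (h a).1 i,
      fun ψ' hψ' => RingHom.ext fun a => (h a).2 (ψ' a)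
        (fun i => DFunLike.congr_fun (hψ' i) a)⟩
end
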